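/- arXiv:1810.04161 — 2 statements merged into one kernel-verified Lean document; each statement's English description precedes it below -/
import Mathlib

section
/- If S is a b-dimensional linear subspace of 𝔽₂^u, then the expected size of the largest bin over a uniformly random linear map T : 𝔽₂^u → 𝔽₂^b is O(1); concretely, E_T[max_y |T⁻¹(y) ∩ S|] = E_T[|S ∩ ker(T)|] ≤ 2 (independently of u and b). -/
/-- The vector space 𝔽₂^n. -/
abbrev V (n : ℕ) : Type := Fin n → ZMod 2

/-- Linear maps 𝔽₂^u → 𝔽₂^b. -/
abbrev LM (u b : ℕ) : Type := V u →ₗ[ZMod 2] V b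

noncomputable instance (u b : ℕ) : Fintype (LM u b) :=
  @Fintype.ofFinite _ (Finite.of_injective _ (LinearMap.coe_injective (M := V u)))

lemma sup_eq_ker (u b : ℕ) (S : Submodule (ZMod 2) (V u)) (T : LM u b) :
    (Finset.univ.sup fun y : V b =>
        Nat.card ((T ⁻¹' {y}) ∩ (S : Set (V u)) : Set (V u))) =
      Nat.card ((S : Set (V u)) ∩ (LinearMap.ker T : Set (V u)) : Set (V u)) := by
  apply le_antisymm
  · apply Finset.sup_le
    intro y _
    by_cases h : ∃ x₀ : V u, x₀ ∈ (T ⁻¹' {y}) ∩ (S : Set (V u))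
    · obtain ⟨x₀, hx₀⟩ := h
      have hTx₀ : T x₀ = y := hx₀.1
      have hSx₀ : x₀ ∈ S := hx₀.2
      have hinj : Function.Injective
          (fun x : ((T ⁻¹' {y}) ∩ (S : Set (V u)) : Set (V u)) =>
            (⟨x.1 - x₀, by
              constructor
              · exact S.sub_mem x.2.2 hSx₀
              · show x.1 - x₀ ∈ LinearMap.ker T
                rw [LinearMap.mem_ker, map_sub, hTx₀]
                have : T x.1 = y := x.2.1
                rw [this, sub_self]⟩ :
              ((S : Set (V u)) ∩ (LinearMap.ker T : Set (V u)) : Set (V u)))) := by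
        intro a c hac
        exact Subtype.ext
          (by simpa [sub_left_injective.eq_iff] using congrArg Subtype.val hac)
      exact Nat.card_le_card_of_injective _ hinj
    · have : ((T ⁻¹' {y}) ∩ (S : Set (V u)) : Set (V u)) = ∅ := by
        rw [Set.eq_empty_iff_forall_notMem]; exact fun x hx => h ⟨x, hx⟩
      simp [this]
  · have hset : (T ⁻¹' {(0 : V b)}) ∩ (S : Set (V u)) =
        (S : Set (V u)) ∩ (LinearMap.ker T : Set (V u)) := by
      ext x
      simp [LinearMap.mem_ker, and_comm]
    calc Nat.card ((S : Set (V u)) ∩ (LinearMap.ker T : Set (V u)) : Set (V u))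
        = Nat.card ((T ⁻¹' {(0 : V b)}) ∩ (S : Set (V u)) : Set (V u)) := by rw [hset]
      _ ≤ _ := Finset.le_sup (f := fun y : V b =>
          Nat.card ((T ⁻¹' {y}) ∩ (S : Set (V u)) : Set (V u))) (Finset.mem_univ (0 : V b))

lemma count_ker (u b : ℕ) (x : V u) (hx : x ≠ 0) :
    (Finset.univ.filter fun T : LM u b => T x = 0).card * 2 ^ b =
      Fintype.card (LM u b) := by
  classical
  set ev : LM u b →ₗ[ZMod 2] V b := LinearMap.applyₗ x with hev
  have hsurj : Function.Surjective ev := by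
    intro y
    obtain ⟨i, hi⟩ : ∃ i, x i ≠ 0 := by
      by_contra h
      push_neg at h
      exact hx (funext fun i => h i)
    have hxi : x i = 1 := (by decide : ∀ a : ZMod 2, a ≠ 0 → a = 1) (x i) hi
    refine ⟨LinearMap.smulRight (LinearMap.proj i) y, ?_⟩
    show x i • y = y
    rw [hxi, one_smul]
  have hquot : Nat.card (LM u b ⧸ LinearMap.ker ev) = 2 ^ b := by
    rw [Nat.card_congr (LinearMap.quotKerEquivOfSurjective ev hsurj).toEquiv]
    simp [Nat.card_eq_fintype_card, ZMod.card]
  have hker : Nat.card (LinearMap.ker ev) =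
      (Finset.univ.filter fun T : LM u b => T x = 0).card := by
    rw [Nat.card_congr (Equiv.subtypeEquivRight
      (fun T => show T ∈ LinearMap.ker ev ↔ T x = 0 from LinearMap.mem_ker))]
    rw [Nat.card_eq_fintype_card, Fintype.card_subtype]
  have hmain := Submodule.card_eq_card_quotient_mul_card (LinearMap.ker ev)
  rw [Nat.card_eq_fintype_card] at hmain
  rw [← hker, ← hquot, hmain]

/-- If S is a b-dimensional subspace of 𝔽₂^u, then the expected largest bin size
over a uniformly random linear map T : 𝔽₂^u → 𝔽₂^b equals E_T[|S ∩ ker T|] and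
is at most 2. -/
theorem stmt_5 (u b : ℕ) (hbu : b ≤ u) (S : Submodule (ZMod 2) (V u))
    (hS : Module.finrank (ZMod 2) S = b) :
    (∑ T : LM u b, ((Finset.univ.sup fun y : V b =>
          Nat.card ((T ⁻¹' {y}) ∩ (S : Set (V u)) : Set (V u)) : ℕ) : ℝ)) /
        (Fintype.card (LM u b)) =
      (∑ T : LM u b,
          (Nat.card ((S : Set (V u)) ∩ (LinearMap.ker T : Set (V u)) : Set (V u)) : ℝ)) /
        (Fintype.card (LM u b)) ∧
    (∑ T : LM u b, ((Finset.univ.sup fun y : V b =>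
          Nat.card ((T ⁻¹' {y}) ∩ (S : Set (V u)) : Set (V u)) : ℕ) : ℝ)) /
        (Fintype.card (LM u b)) ≤ 2 := by
  classical
  have heq : ∀ T : LM u b, (Finset.univ.sup fun y : V b =>
      Nat.card ((T ⁻¹' {y}) ∩ (S : Set (V u)) : Set (V u))) =
      Nat.card ((S : Set (V u)) ∩ (LinearMap.ker T : Set (V u)) : Set (V u)) :=
    sup_eq_ker u b S
  have h1 : (∑ T : LM u b, ((Finset.univ.sup fun y : V b =>
          Nat.card ((T ⁻¹' {y}) ∩ (S : Set (V u)) : Set (V u)) : ℕ) : ℝ)) /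
        (Fintype.card (LM u b)) =
      (∑ T : LM u b,
          (Nat.card ((S : Set (V u)) ∩ (LinearMap.ker T : Set (V u)) : Set (V u)) : ℝ)) /
        (Fintype.card (LM u b)) := by
    congr 1
    exact Finset.sum_congr rfl fun T _ => by rw [heq T]
  refine ⟨h1, ?_⟩
  rw [h1]
  -- now the counting bound
  set N := Fintype.card (LM u b) with hN
  set F : Finset (V u) := Set.toFinset (S : Set (V u)) with hF
  have hcardT : ∀ T : LM u b,
      Nat.card ((S : Set (V u)) ∩ (LinearMap.ker T : Set (V u)) : Set (V u)) =
      (F.filter fun x => T x = 0).card := by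
    intro T
    have hset : ((S : Set (V u)) ∩ (LinearMap.ker T : Set (V u)) : Set (V u)) =
        ↑(F.filter fun x => T x = 0) := by
      ext x
      simp [hF, LinearMap.mem_ker, Set.mem_toFinset]
    rw [hset, Nat.card_coe_set_eq, Set.ncard_coe_finset]
  have hFcard : F.card = 2 ^ b := by
    have h1 : F.card = Fintype.card S := by
      rw [hF, Set.toFinset_card]
      exact Fintype.card_congr (Equiv.refl _)
    rw [h1, Module.card_eq_pow_finrank (K := ZMod 2), ZMod.card, hS]
  have h0F : (0 : V u) ∈ F := by simp [hF, Set.mem_toFinset]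
  have hsum : (∑ T : LM u b,
      Nat.card ((S : Set (V u)) ∩ (LinearMap.ker T : Set (V u)) : Set (V u))) ≤ 2 * N := by
    have hswap : (∑ T : LM u b,
        Nat.card ((S : Set (V u)) ∩ (LinearMap.ker T : Set (V u)) : Set (V u))) =
        ∑ x ∈ F, (Finset.univ.filter fun T : LM u b => T x = 0).card := by
      calc (∑ T : LM u b, Nat.card ((S : Set (V u)) ∩ (LinearMap.ker T : Set (V u)) : Set (V u)))
          = ∑ T : LM u b, ∑ x ∈ F, if T x = 0 then 1 else 0 := by
            refine Finset.sum_congr rfl fun T _ => ?_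
            rw [hcardT T, Finset.card_filter]
        _ = ∑ x ∈ F, ∑ T : LM u b, if T x = 0 then 1 else 0 := Finset.sum_comm
        _ = ∑ x ∈ F, (Finset.univ.filter fun T : LM u b => T x = 0).card := by
            refine Finset.sum_congr rfl fun x _ => ?_
            rw [Finset.card_filter]
    rw [hswap]
    have hsplit : (∑ x ∈ F, (Finset.univ.filter fun T : LM u b => T x = 0).card) =
        (Finset.univ.filter fun T : LM u b => T 0 = 0).card +
        ∑ x ∈ F.erase 0, (Finset.univ.filter fun T : LM u b => T x = 0).card :=
      (Finset.add_sum_erase F _ h0F).symm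
    rw [hsplit]
    have hc0 : (Finset.univ.filter fun T : LM u b => T 0 = 0).card = N := by
      rw [Finset.filter_true_of_mem fun T _ => map_zero T, Finset.card_univ]
    rw [hc0]
    have hpow : 0 < 2 ^ b := Nat.pow_pos (by norm_num)
    apply Nat.le_of_mul_le_mul_right _ hpow
    rw [add_mul, Finset.sum_mul]
    have herase : (∑ x ∈ F.erase 0,
        (Finset.univ.filter fun T : LM u b => T x = 0).card * 2 ^ b) =
        (F.erase 0).card * N := by
      rw [Finset.sum_congr rfl fun x hx => count_ker u b x (Finset.ne_of_mem_erase hx)]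
      rw [Finset.sum_const, smul_eq_mul]
    rw [herase]
    have hecard : (F.erase 0).card ≤ 2 ^ b := by
      calc (F.erase 0).card ≤ F.card := Finset.card_erase_le
        _ = 2 ^ b := hFcard
    calc N * 2 ^ b + (F.erase 0).card * N ≤ N * 2 ^ b + 2 ^ b * N :=
          Nat.add_le_add_left (Nat.mul_le_mul_right N hecard) _
      _ = 2 * N * 2 ^ b := by ring
  have hNpos : (0 : ℝ) < N := by
    have : 0 < N := Fintype.card_pos
    exact_mod_cast this
  rw [div_le_iff₀ hNpos]
  calc (∑ T : LM u b,
      (Nat.card ((S : Set (V u)) ∩ (LinearMap.ker T : Set (V u)) : Set (V u)) : ℝ))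
      = ((∑ T : LM u b,
        Nat.card ((S : Set (V u)) ∩ (LinearMap.ker T : Set (V u)) : Set (V u)) : ℕ) : ℝ) := by
        push_cast; ring
    _ ≤ ((2 * N : ℕ) : ℝ) := by exact_mod_cast hsum
    _ = 2 * N := by push_cast; ring
end

section
/- The function g(x) = x^(−log₂ b + log₂(1/x) + log₂ log₂(1/x)) is monotone increasing on an interval of the form (0, δ) for suitable δ ∈ (0,1) whenever b ≥ 2. (Monotonicity of the bound used in the proof of the tail estimate.) -/
open Real

noncomputable def Hfun (b : ℝ) (x : ℝ) : ℝ :=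
  Real.log x * (-Real.log b - Real.log x +
    (Real.log (-Real.log x) - Real.log (Real.log 2)))

lemma Hfun_hasDerivAt (b x : ℝ) (hx0 : 0 < x) (hx1 : x < 1) :
    HasDerivAt (Hfun b)
      (x⁻¹ * (-Real.log b - 2 * Real.log x +
        (Real.log (-Real.log x) - Real.log (Real.log 2)) + 1)) x := by
  have hxne : x ≠ 0 := ne_of_gt hx0
  have hlx : Real.log x < 0 := Real.log_neg hx0 hx1
  have hlxne : Real.log x ≠ 0 := ne_of_lt hlx
  have h1 : HasDerivAt Real.log x⁻¹ x := Real.hasDerivAt_log hxne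
  have h2 : HasDerivAt (fun x => -Real.log x) (-x⁻¹) x := h1.neg
  have h3 : HasDerivAt (fun x => Real.log (-Real.log x)) (-x⁻¹ / -Real.log x) x :=
    h2.log (neg_ne_zero.2 hlxne)
  have h4 : HasDerivAt (fun x => -Real.log b - Real.log x +
      (Real.log (-Real.log x) - Real.log (Real.log 2)))
      (0 - x⁻¹ + (-x⁻¹ / -Real.log x - 0)) x :=
    (((hasDerivAt_const x (-Real.log b)).sub h1).add (h3.sub (hasDerivAt_const x (Real.log (Real.log 2)))))
  have h5 := h1.mul h4
  refine h5.congr_deriv ?_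
  field_simp
  ring

/-- For b ≥ 2, the function g(x) = x^(−log₂ b − log₂ x + log₂ log₂ (1/x)) is
monotone increasing on an interval (0, δ) for some δ ∈ (0,1). -/
theorem stmt_10 (b : ℝ) (hb : 2 ≤ b) :
    ∃ δ : ℝ, δ ∈ Set.Ioo (0 : ℝ) 1 ∧
      MonotoneOn (fun x : ℝ =>
          x ^ (-Real.logb 2 b - Real.logb 2 x + Real.logb 2 (Real.logb 2 (1 / x))))
        (Set.Ioo (0 : ℝ) δ) := by
  have hlb : Real.log 2 ≤ Real.log b := Real.log_le_log (by norm_num) hb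
  have hl2 : (0 : ℝ) < Real.log 2 := Real.log_pos (by norm_num)
  have hl2ne : Real.log 2 ≠ 0 := ne_of_gt hl2
  have hl2lt : Real.log 2 < 1 := by
    have := Real.log_two_lt_d9; linarith
  set δ : ℝ := Real.exp (-(Real.log b + 1)) with hδdef
  have hδ0 : 0 < δ := Real.exp_pos _
  have hδ1 : δ < 1 := by
    rw [hδdef, Real.exp_lt_one_iff]
    linarith
  -- basic facts for x in the interval
  have hfacts : ∀ x ∈ Set.Ioo (0 : ℝ) δ, Real.log x < -(Real.log b + 1) := by
    intro x hx
    have := Real.log_lt_log hx.1 hx.2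
    rwa [hδdef, Real.log_exp] at this
  have hx1 : ∀ x ∈ Set.Ioo (0 : ℝ) δ, x < 1 := fun x hx => lt_trans hx.2 hδ1
  -- the function equals exp (Hfun b x / log 2) on the interval
  have hEq : ∀ x ∈ Set.Ioo (0 : ℝ) δ,
      x ^ (-Real.logb 2 b - Real.logb 2 x + Real.logb 2 (Real.logb 2 (1 / x)))
        = Real.exp (Hfun b x / Real.log 2) := by
    intro x hx
    have hlx : Real.log x < -(Real.log b + 1) := hfacts x hx
    have hlxneg : Real.log x < 0 := by linarith
    have hlxne : Real.log x ≠ 0 := ne_of_lt hlxneg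
    rw [Real.rpow_def_of_pos hx.1]
    congr 1
    have h1 : Real.logb 2 (1 / x) = -Real.log x / Real.log 2 := by
      rw [Real.logb, one_div, Real.log_inv]
    rw [h1, Real.logb, Real.logb, Real.logb,
      Real.log_div (neg_ne_zero.2 hlxne) hl2ne, Hfun]
    field_simp
  have hmono : StrictMonoOn (Hfun b) (Set.Ioo 0 δ) := by
    apply strictMonoOn_of_deriv_pos (convex_Ioo _ _)
    · intro x hx
      exact (Hfun_hasDerivAt b x hx.1 (hx1 x hx)).continuousAt.continuousWithinAt
    · intro x hx
      rw [interior_Ioo] at hx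
      rw [(Hfun_hasDerivAt b x hx.1 (hx1 x hx)).deriv]
      have hlx : Real.log x < -(Real.log b + 1) := hfacts x hx
      have hnl : 1 < -Real.log x := by linarith
      have h1 : 0 < Real.log (-Real.log x) := Real.log_pos hnl
      have h2 : Real.log (Real.log 2) < 0 := Real.log_neg hl2 hl2lt
      have h3 : 0 < x⁻¹ := inv_pos.2 hx.1
      have : 0 < -Real.log b - 2 * Real.log x +
          (Real.log (-Real.log x) - Real.log (Real.log 2)) + 1 := by linarith
      positivity
  refine ⟨δ, ⟨hδ0, hδ1⟩, ?_⟩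
  intro a ha a' ha' haa'
  simp only
  rw [hEq a ha, hEq a' ha', Real.exp_le_exp]
  gcongr
  exact (hmono.monotoneOn) ha ha' haa'
end
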